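/- Let 0 < p < q < ∞ and let M be the centered B-spline of order r. There is a constant C = C(p,q,r,d) such that for every k ∈ ℤ_+^d and every g in the span Σ_r^d(k) of the B-splines M_{k,s}, s ∈ J^d(k), one has the Nikol'skii-type inequality ‖g‖_{L_q([0,1]^d)} ≤ C·2^{(1/p - 1/q)|k|_1} ‖g‖_{L_p([0,1]^d)}. -/

import Mathlib

open MeasureTheory
open scoped ENNReal NNReal

/-- `centeredBSpline n` is the centered B-spline of order `n+1`. -/
noncomputable def centeredBSpline : ℕ → ℝ → ℝ
  | 0 => Set.indicator (Set.Ico (-(1 : ℝ) / 2) (1 / 2)) fun _ => 1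
  | n + 1 => fun x => ∫ t in Set.Icc (-(1 : ℝ) / 2) (1 / 2), centeredBSpline n (x - t)

/-- The mixed tensor-product B-spline `M_{k,s}(x) = ∏_i M(2^{k_i} x_i - s_i)`. -/
noncomputable def mixedBSpline (r d : ℕ) (k : Fin d → ℕ) (s : Fin d → ℤ)
    (x : Fin d → ℝ) : ℝ :=
  ∏ i, centeredBSpline (r - 1) ((2 : ℝ) ^ k i * x i - s i)

/-- The index set `J^d(k)`. -/
def mixedIndexSet (r d : ℕ) (k : Fin d → ℕ) : Set (Fin d → ℤ) :=
  {s | ∀ i, -(r : ℝ) / 2 < (s i : ℝ) ∧ (s i : ℝ) < 2 ^ k i + r / 2}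

/-- The unit cube `[0,1]^d`. -/
def unitCube (d : ℕ) : Set (Fin d → ℝ) := Set.univ.pi fun _ => Set.Icc 0 1



lemma cB_nonneg : ∀ (n : ℕ) (x : ℝ), 0 ≤ centeredBSpline n x
  | 0, x => Set.indicator_nonneg (fun _ _ => zero_le_one) x
  | n+1, x => integral_nonneg fun t => cB_nonneg n _

lemma cB_measurable : ∀ n, Measurable (centeredBSpline n)
  | 0 => measurable_const.indicator measurableSet_Ico
  | (n+1) => by
      have h := cB_measurable n
      show Measurable fun x => ∫ t in Set.Icc (-(1:ℝ)/2) (1/2), centeredBSpline n (x - t)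
      have hj : StronglyMeasurable (fun p : ℝ × ℝ => centeredBSpline n (p.1 - p.2)) :=
        (h.comp (measurable_fst.sub measurable_snd)).stronglyMeasurable
      exact hj.integral_prod_right'.measurable

lemma cB_le_one : ∀ (n : ℕ) (x : ℝ), centeredBSpline n x ≤ 1
  | 0, x => Set.indicator_le' (fun _ _ => le_refl _) (fun _ _ => zero_le_one) x
  | n+1, x => by
      have hi : Integrable (fun t => centeredBSpline n (x - t))
          (volume.restrict (Set.Icc (-(1:ℝ)/2) (1/2))) := by
        refine Integrable.mono' (integrable_const 1)
          (((cB_measurable n).comp (measurable_const.sub measurable_id)).aestronglyMeasurable) ?_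
        filter_upwards with t
        rw [Real.norm_eq_abs, abs_of_nonneg (cB_nonneg n _)]
        exact cB_le_one n _
      show (∫ t in Set.Icc (-(1:ℝ)/2) (1/2), centeredBSpline n (x - t)) ≤ 1
      calc (∫ t in Set.Icc (-(1:ℝ)/2) (1/2), centeredBSpline n (x - t))
          ≤ ∫ _t in Set.Icc (-(1:ℝ)/2) (1/2), (1:ℝ) :=
            integral_mono hi (integrable_const 1) fun t => cB_le_one n _
        _ = 1 := by
            rw [setIntegral_const, Real.volume_real_Icc]
            norm_num

lemma cB_zero : ∀ (n : ℕ) (x : ℝ), (((n:ℝ)+1)/2 ≤ x ∨ x < -(((n:ℝ)+1)/2)) →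
    centeredBSpline n x = 0
  | 0, x, h => by
      apply Set.indicator_of_notMem
      simp only [Set.mem_Ico, not_and_or, not_le, not_lt]
      rcases h with h | h
      · right; linarith [h]
      · left; linarith [h]
  | n+1, x, h => by
      show (∫ t in Set.Icc (-(1:ℝ)/2) (1/2), centeredBSpline n (x - t)) = 0
      rw [setIntegral_congr_fun measurableSet_Icc (g := fun _ => (0:ℝ)) ?_, integral_const,
        smul_zero]
      intro t ht
      rcases ht with ⟨ht1, ht2⟩
      push_cast at h ⊢
      rcases h with h | h
      · exact cB_zero n _ (Or.inl (by push_cast; linarith))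
      · exact cB_zero n _ (Or.inr (by push_cast; linarith))

lemma mB_nonneg (r d : ℕ) (k : Fin d → ℕ) (s : Fin d → ℤ) (x : Fin d → ℝ) :
    0 ≤ mixedBSpline r d k s x :=
  Finset.prod_nonneg fun i _ => cB_nonneg _ _

lemma mB_le_one (r d : ℕ) (k : Fin d → ℕ) (s : Fin d → ℤ) (x : Fin d → ℝ) :
    mixedBSpline r d k s x ≤ 1 :=
  Finset.prod_le_one (fun i _ => cB_nonneg _ _) (fun i _ => cB_le_one _ _)

lemma mB_measurable (r d : ℕ) (k : Fin d → ℕ) (s : Fin d → ℤ) :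
    Measurable (mixedBSpline r d k s) :=
  Finset.measurable_prod _ fun i _ =>
    (cB_measurable _).comp (((measurable_pi_apply i).const_mul _).sub_const _)

lemma cell_cover (N : ℕ) (hN : 0 < N) (x : ℝ) (hx0 : 0 ≤ x) (hx1 : x ≤ 1) :
    ∃ j : ℕ, j < N ∧ (j : ℝ) / N ≤ x ∧ x ≤ ((j : ℝ) + 1) / N := by
  have hNR : (0:ℝ) < N := by exact_mod_cast hN
  by_cases hx : x = 1
  · refine ⟨N - 1, Nat.sub_lt hN one_pos, ?_, ?_⟩
    · subst hx
      rw [div_le_one hNR]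
      have : ((N - 1 : ℕ) : ℝ) ≤ (N : ℝ) := by
        have := Nat.sub_le N 1
        exact_mod_cast this
      linarith
    · subst hx
      rw [le_div_iff₀ hNR, one_mul]
      have : ((N - 1 : ℕ) : ℝ) = (N : ℝ) - 1 := by
        have := Nat.succ_pred_eq_of_pos hN
        push_cast [Nat.cast_sub (Nat.one_le_iff_ne_zero.mpr (Nat.pos_iff_ne_zero.mp hN))]
        ring
      rw [this]; linarith
  · have hx1' : x < 1 := lt_of_le_of_ne hx1 hx
    have hfl : (0:ℤ) ≤ ⌊x * N⌋ := Int.le_floor.mpr (by push_cast; positivity)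
    set j : ℕ := ⌊x * N⌋.toNat with hj
    have hjc : (j : ℝ) = (⌊x * N⌋ : ℝ) := by
      rw [hj]; exact_mod_cast congrArg Int.cast (Int.toNat_of_nonneg hfl)
    refine ⟨j, ?_, ?_, ?_⟩
    · have h1 : (⌊x * N⌋ : ℝ) ≤ x * N := Int.floor_le _
      have h2 : x * N < N := by nlinarith
      have : (j : ℝ) < N := by rw [hjc]; linarith
      exact_mod_cast this
    · rw [div_le_iff₀ hNR, hjc]
      exact Int.floor_le _
    · rw [le_div_iff₀ hNR, hjc]
      have := Int.lt_floor_add_one (x * N)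
      linarith


lemma vol_affine_preimage {a b : ℝ} (ha : 0 < a) {A : Set ℝ} (hA : MeasurableSet A) :
    volume ((fun x => a * x + b) ⁻¹' A) = ENNReal.ofReal a⁻¹ * volume A := by
  have h1 : (fun x : ℝ => a * x + b) ⁻¹' A = (a * ·) ⁻¹' ((· + b) ⁻¹' A) := rfl
  have hS : MeasurableSet ((· + b) ⁻¹' A) := hA.preimage (measurable_add_const b)
  rw [h1, ← Measure.map_apply (measurable_const_mul a) hS,
    Real.map_volume_mul_left (ne_of_gt ha), Measure.smul_apply, smul_eq_mul,
    measure_preimage_add_right, abs_of_pos (inv_pos.mpr ha)]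

lemma affine_measurePreserving {d : ℕ} (h : Fin d → ℝ) (hp : ∀ i, 0 < h i) (b : Fin d → ℝ) :
    MeasurePreserving (fun y : Fin d → ℝ => fun i => h i * y i + b i)
      ((∏ i, ENNReal.ofReal (h i)) • volume) volume := by
  have hmeas : Measurable (fun y : Fin d → ℝ => fun i => h i * y i + b i) :=
    measurable_pi_lambda _ fun i => ((measurable_pi_apply i).const_mul _).add_const _
  refine ⟨hmeas, ?_⟩
  rw [Measure.map_smul]
  have hv : (volume : Measure (Fin d → ℝ)) = Measure.pi fun _ => (volume : Measure ℝ) :=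
    rfl
  conv_rhs => rw [hv]
  refine (Measure.pi_eq fun s hs => ?_).symm
  rw [Measure.smul_apply, Measure.map_apply hmeas (MeasurableSet.univ_pi hs)]
  have hpre : (fun y : Fin d → ℝ => fun i => h i * y i + b i) ⁻¹' Set.pi Set.univ s
      = Set.pi Set.univ (fun i => (fun x => h i * x + b i) ⁻¹' s i) := by
    ext y; simp [Set.mem_pi]
  rw [hpre, volume_pi_pi, smul_eq_mul, ← Finset.prod_mul_distrib]
  refine Finset.prod_congr rfl fun i _ => ?_
  rw [vol_affine_preimage (hp i) (hs i), ENNReal.ofReal_inv_of_pos (hp i), ← mul_assoc,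
    ENNReal.mul_inv_cancel (by simp [hp i]) ENNReal.ofReal_ne_top, one_mul]


lemma unitCube_measurable (d : ℕ) : MeasurableSet (unitCube d) :=
  MeasurableSet.univ_pi fun _ => measurableSet_Icc

lemma unitCube_volume (d : ℕ) : volume (unitCube d) = 1 := by
  rw [unitCube, volume_pi_pi]
  simp [Real.volume_Icc]

instance unitCube_finiteMeasure (d : ℕ) : IsFiniteMeasure (volume.restrict (unitCube d)) := by
  constructor
  rw [Measure.restrict_apply_univ, unitCube_volume]
  exact ENNReal.one_lt_top

lemma findim_nikolskii {d : ℕ} {ι : Type} [Fintype ι]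
    (p : ℝ) (hp : 0 < p) (φ : ι → (Fin d → ℝ) → ℝ)
    (hφm : ∀ t, Measurable (φ t)) (hφb : ∀ t y, |φ t y| ≤ 1) :
    ∃ co : ℝ, 0 < co ∧ ∀ c : ι → ℝ,
      ∀ᵐ y ∂(volume.restrict (unitCube d)),
        |∑ t, c t * φ t y| ^ p ≤
          co * ∫ y, |∑ t, c t * φ t y| ^ p ∂(volume.restrict (unitCube d)) := by
  classical
  set μ := volume.restrict (unitCube d) with hμ
  set f : (ι → ℝ) → (Fin d → ℝ) → ℝ := fun c y => ∑ t, c t * φ t y with hf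
  have hfm : ∀ c, Measurable (f c) := fun c =>
    Finset.measurable_sum _ fun t _ => (hφm t).const_mul (c t)
  set B : ℝ := (Fintype.card ι : ℝ) + 1 with hB
  have hB0 : 0 < B := by positivity
  have hfb : ∀ c y, |f c y| ≤ B * ‖c‖ := by
    intro c y
    calc |f c y| ≤ ∑ t, |c t * φ t y| := Finset.abs_sum_le_sum_abs _ _
      _ ≤ ∑ _t : ι, ‖c‖ := by
          refine Finset.sum_le_sum fun t _ => ?_
          rw [abs_mul]
          calc |c t| * |φ t y| ≤ |c t| * 1 :=
              mul_le_mul_of_nonneg_left (hφb t y) (abs_nonneg _)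
            _ = |c t| := mul_one _
            _ ≤ ‖c‖ := by
                have := norm_le_pi_norm c t
                simpa [Real.norm_eq_abs] using this
      _ = (Fintype.card ι : ℝ) * ‖c‖ := by
          rw [Finset.sum_const, Finset.card_univ, nsmul_eq_mul]
      _ ≤ B * ‖c‖ := by
          have : (0:ℝ) ≤ ‖c‖ := norm_nonneg _
          nlinarith
  have hIntp : ∀ c, Integrable (fun y => |f c y| ^ p) μ := by
    intro c
    refine Integrable.mono' (integrable_const ((B * ‖c‖) ^ p))
      (((hfm c).abs.pow_const p).aestronglyMeasurable) ?_
    filter_upwards with y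
    rw [Real.norm_eq_abs, abs_of_nonneg (Real.rpow_nonneg (abs_nonneg _) _)]
    exact Real.rpow_le_rpow (abs_nonneg _) (hfb c y) hp.le
  set F : (ι → ℝ) → ℝ := fun c => ∫ y, |f c y| ^ p ∂μ with hF
  have hFnn : ∀ c, 0 ≤ F c := fun c =>
    integral_nonneg fun y => Real.rpow_nonneg (abs_nonneg _) _
  have hFzero : ∀ c, F c = 0 ↔ f c =ᵐ[μ] 0 := by
    intro c
    rw [hF]
    rw [integral_eq_zero_iff_of_nonneg (fun y => Real.rpow_nonneg (abs_nonneg _) _) (hIntp c)]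
    constructor
    · intro h
      filter_upwards [h] with y hy
      simp only [Pi.zero_apply] at hy ⊢
      have := Real.rpow_eq_zero_iff_of_nonneg (abs_nonneg (f c y)) |>.mp hy
      exact abs_eq_zero.mp this.1
    · intro h
      filter_upwards [h] with y hy
      simp only [Pi.zero_apply] at hy ⊢
      rw [hy, abs_zero, Real.zero_rpow (ne_of_gt hp)]
  -- homogeneity
  have hfsmul : ∀ (a : ℝ) (c : ι → ℝ) y, f (a • c) y = a * f c y := by
    intro a c y
    simp only [hf, Pi.smul_apply, smul_eq_mul, Finset.mul_sum, mul_assoc]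
  have hfadd : ∀ (c c' : ι → ℝ) y, f (c + c') y = f c y + f c' y := by
    intro c c' y
    simp [hf, add_mul, Finset.sum_add_distrib]
  have hFsmul : ∀ (a : ℝ) (c : ι → ℝ), F (a • c) = |a| ^ p * F c := by
    intro a c
    have heq : (fun y => |f (a • c) y| ^ p) = fun y => (|a| ^ p) • (|f c y| ^ p) := by
      funext y
      rw [hfsmul, abs_mul, Real.mul_rpow (abs_nonneg _) (abs_nonneg _), smul_eq_mul]
    show (∫ y, |f (a • c) y| ^ p ∂μ) = |a| ^ p * ∫ y, |f c y| ^ p ∂μ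
    rw [heq, integral_smul, smul_eq_mul]
  -- continuity of F
  have hFcont : Continuous F := by
    rw [continuous_iff_continuousAt]
    intro c₀
    refine continuousAt_of_dominated (bound := fun _ => (B * (‖c₀‖ + 1)) ^ p) ?_ ?_ ?_ ?_
    · filter_upwards with c
      exact ((hfm c).abs.pow_const p).aestronglyMeasurable
    · filter_upwards [Metric.ball_mem_nhds c₀ one_pos] with c hc
      filter_upwards with y
      rw [Real.norm_eq_abs, abs_of_nonneg (Real.rpow_nonneg (abs_nonneg _) _)]
      refine Real.rpow_le_rpow (abs_nonneg _) ((hfb c y).trans ?_) hp.le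
      have h1 : ‖c‖ ≤ ‖c₀‖ + 1 := by
        have := norm_sub_norm_le c c₀
        have h2 : dist c c₀ < 1 := Metric.mem_ball.mp hc
        rw [dist_eq_norm] at h2
        linarith
      nlinarith [norm_nonneg c]
    · exact integrable_const _
    · filter_upwards with y
      have h1 : Continuous fun c : ι → ℝ => |f c y| :=
        (continuous_finset_sum _ fun t _ => (continuous_apply t).mul continuous_const).abs
      exact (Real.continuousAt_rpow_const _ p (Or.inr hp.le)).comp h1.continuousAt
  -- kernel submodule
  set K : Submodule ℝ (ι → ℝ) :=
    { carrier := {c | f c =ᵐ[μ] 0}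
      add_mem' := by
        intro c c' hc hc'
        show f (c + c') =ᵐ[μ] 0
        filter_upwards [(hc : f c =ᵐ[μ] 0), (hc' : f c' =ᵐ[μ] 0)] with y hy hy'
        simp only [Pi.zero_apply] at hy hy' ⊢
        rw [hfadd, hy, hy', add_zero]
      zero_mem' := by
        show f 0 =ᵐ[μ] 0
        refine Filter.Eventually.of_forall fun y => ?_
        simp [hf]
      smul_mem' := by
        intro a c hc
        show f (a • c) =ᵐ[μ] 0
        filter_upwards [(hc : f c =ᵐ[μ] 0)] with y hy
        simp only [Pi.zero_apply] at hy ⊢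
        rw [hfsmul, hy, mul_zero] } with hK
  have hKmem : ∀ c : ι → ℝ, c ∈ K ↔ f c =ᵐ[μ] 0 := fun c => Iff.rfl
  obtain ⟨W, hW⟩ := Submodule.exists_isCompl K
  have hdecomp : ∀ c : ι → ℝ, ∃ w ∈ W, f c =ᵐ[μ] f w ∧ F c = F w := by
    intro c
    have hmem : c ∈ K ⊔ W := by rw [hW.sup_eq_top]; trivial
    obtain ⟨kc, hkc, wc, hwc, hsum⟩ := Submodule.mem_sup.mp hmem
    have hae : f c =ᵐ[μ] f wc := by
      filter_upwards [(hKmem kc).mp hkc] with y hy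
      simp only [Pi.zero_apply] at hy
      have : f c y = f kc y + f wc y := by rw [← hsum, hfadd]
      rw [this, hy, zero_add]
    refine ⟨wc, hwc, hae, ?_⟩
    show (∫ y, |f c y| ^ p ∂μ) = ∫ y, |f wc y| ^ p ∂μ
    refine integral_congr_ae ?_
    filter_upwards [hae] with y hy
    rw [hy]
  by_cases hWbot : W = ⊥
  · refine ⟨1, one_pos, fun c => ?_⟩
    obtain ⟨w, hw, hae, hFc⟩ := hdecomp c
    rw [hWbot, Submodule.mem_bot] at hw
    subst hw
    filter_upwards [hae] with y hy
    show |f c y| ^ p ≤ 1 * F c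
    rw [hy]
    have : f 0 y = 0 := by simp [hf]
    rw [this, abs_zero, Real.zero_rpow (ne_of_gt hp), one_mul]
    exact hFnn c
  · obtain ⟨w₀, hw₀W, hw₀⟩ := Submodule.exists_mem_ne_zero_of_ne_bot hWbot
    set w₀' : W := ⟨w₀, hw₀W⟩ with hw₀'
    have hw₀'ne : w₀' ≠ 0 := by
      intro h
      exact hw₀ (by simpa [hw₀'] using congrArg Subtype.val h)
    have hnorm0 : ‖w₀'‖ ≠ 0 := norm_ne_zero_iff.mpr hw₀'ne
    set u₀ : W := ‖w₀'‖⁻¹ • w₀' with hu₀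
    have hu₀mem : u₀ ∈ Metric.sphere (0 : W) 1 := by
      rw [mem_sphere_zero_iff_norm]
      have h9 : ‖((‖w₀'‖⁻¹ • w₀' : W) : ι → ℝ)‖ = 1 := by
        rw [Submodule.coe_smul, norm_smul, norm_inv, norm_norm]
        exact inv_mul_cancel₀ hnorm0
      exact h9
    have hcompact : IsCompact (Metric.sphere (0 : W) 1) := isCompact_sphere 0 1
    have hFWcont : Continuous fun w : W => F w.val := hFcont.comp continuous_subtype_val
    obtain ⟨wmin, hwminS, hwmin⟩ :=
      hcompact.exists_isMinOn ⟨u₀, hu₀mem⟩ hFWcont.continuousOn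
    set m : ℝ := F wmin.val with hm
    have hmpos : 0 < m := by
      rcases lt_or_eq_of_le (hFnn wmin.val) with h | h
      · exact h
      · exfalso
        have hker : (wmin : ι → ℝ) ∈ K := (hKmem _).mpr ((hFzero _).mp h.symm)
        have : (wmin : ι → ℝ) = 0 :=
          Submodule.disjoint_def.mp hW.disjoint _ hker wmin.2
        have : wmin = 0 := Subtype.ext this
        rw [this] at hwminS
        simp at hwminS
    have hlow : ∀ w : W, m * ‖w‖ ^ p ≤ F w.val := by
      intro w
      by_cases hw : w = 0
      · subst hw
        simp only [norm_zero, Real.zero_rpow (ne_of_gt hp), mul_zero]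
        exact hFnn _
      · have hnw : ‖w‖ ≠ 0 := norm_ne_zero_iff.mpr hw
        set u : W := ‖w‖⁻¹ • w with hu
        have humem : u ∈ Metric.sphere (0 : W) 1 := by
          rw [mem_sphere_zero_iff_norm]
          have h9 : ‖((‖w‖⁻¹ • w : W) : ι → ℝ)‖ = 1 := by
            rw [Submodule.coe_smul, norm_smul, norm_inv, norm_norm]
            exact inv_mul_cancel₀ hnw
          exact h9
        have h1 : m ≤ F u.val := hwmin humem
        have h2 : w = ‖w‖ • u := by
          rw [hu, smul_smul, mul_inv_cancel₀ hnw, one_smul]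
        have h3 : F w.val = ‖w‖ ^ p * F u.val := by
          have : (w : ι → ℝ) = ‖w‖ • (u : ι → ℝ) := by
            conv_lhs => rw [h2]
            exact Submodule.coe_smul _ _
          rw [this, hFsmul, abs_of_nonneg (norm_nonneg _)]
        rw [h3, mul_comm m (‖w‖ ^ p)]
        exact mul_le_mul_of_nonneg_left h1 (Real.rpow_nonneg (norm_nonneg w) p)
    refine ⟨B ^ p / m, div_pos (Real.rpow_pos_of_pos hB0 _) hmpos, fun c => ?_⟩
    obtain ⟨w, hwW, hae, hFc⟩ := hdecomp (c := c)
    set w' : W := ⟨w, hwW⟩ with hw'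
    filter_upwards [hae] with y hy
    show |f c y| ^ p ≤ B ^ p / m * F c
    rw [hy, hFc]
    have h1 : |f w y| ^ p ≤ (B * ‖w‖) ^ p :=
      Real.rpow_le_rpow (abs_nonneg _) (hfb w y) hp.le
    have h2 : (B * ‖w‖) ^ p = B ^ p * ‖w‖ ^ p :=
      Real.mul_rpow hB0.le (norm_nonneg _)
    have hww' : ‖w‖ = ‖w'‖ := rfl
    have h3 : m * ‖w'‖ ^ p ≤ F w := hlow w'
    have h4 : B ^ p * ‖w'‖ ^ p ≤ B ^ p / m * F w := by
      have h5 := mul_le_mul_of_nonneg_left h3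
        (div_nonneg (Real.rpow_nonneg hB0.le p) hmpos.le)
      calc B ^ p * ‖w'‖ ^ p = B ^ p / m * (m * ‖w'‖ ^ p) := by
            field_simp
        _ ≤ B ^ p / m * F w := h5
    calc |f w y| ^ p ≤ B ^ p * ‖w‖ ^ p := by rw [← h2]; exact h1
      _ ≤ B ^ p / m * F w := by rw [hww']; exact h4


set_option maxHeartbeats 1000000 in
/-- Nikol'skii inequality for mixed splines:
`‖g‖_q ≤ C 2^{(1/p-1/q)|k|_1} ‖g‖_p` for `g ∈ Σ_r^d(k)` and `0 < p < q < ∞`. -/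
theorem mixed_bspline_nikolskii (r d : ℕ) (hr : 1 ≤ r) (hd : 0 < d)
    (p q : ℝ) (hp : 0 < p) (hpq : p < q) :
    ∃ C : ℝ, 0 < C ∧
      ∀ (k : Fin d → ℕ) (a : (Fin d → ℤ) → ℝ),
        (∀ s, s ∉ mixedIndexSet r d k → a s = 0) →
        eLpNorm (fun x => ∑' s : Fin d → ℤ, a s * mixedBSpline r d k s x)
            (ENNReal.ofReal q) (volume.restrict (unitCube d)) ≤
          ENNReal.ofReal (C * (2 : ℝ) ^ ((1 / p - 1 / q) * ∑ i, (k i : ℝ))) *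
            eLpNorm (fun x => ∑' s : Fin d → ℤ, a s * mixedBSpline r d k s x)
              (ENNReal.ofReal p) (volume.restrict (unitCube d)) := by
  classical
  have hq : 0 < q := hp.trans hpq
  set ι : Type := Fin d → ↥(Finset.Icc (-(r : ℤ) - 1) ((r : ℤ) + 1)) with hι
  set φ : ι → (Fin d → ℝ) → ℝ :=
    fun t y => ∏ i, centeredBSpline (r - 1) ((y i + ((t i : ℤ) : ℝ)) / 2) with hφ
  have hφm : ∀ t, Measurable (φ t) := fun t =>
    Finset.measurable_prod _ fun i _ =>
      (cB_measurable _).comp (((measurable_pi_apply i).add_const _).div_const 2)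
  have hφb : ∀ t y, |φ t y| ≤ 1 := by
    intro t y
    rw [hφ, abs_of_nonneg (Finset.prod_nonneg fun i _ => cB_nonneg _ _)]
    exact Finset.prod_le_one (fun i _ => cB_nonneg _ _) (fun i _ => cB_le_one _ _)
  obtain ⟨co, hco, hni⟩ := findim_nikolskii (d := d) (ι := ι) p hp φ hφm hφb
  set β : ℝ := 1 / p - 1 / q with hβ
  have hβpos : 0 < β := by
    rw [hβ]
    have := one_div_lt_one_div_of_lt hp hpq
    linarith
  refine ⟨(co * 2 ^ d) ^ β, Real.rpow_pos_of_pos (by positivity) _, ?_⟩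
  intro k a ha
  set μ := volume.restrict (unitCube d) with hμ
  set A : Finset (Fin d → ℤ) :=
    Fintype.piFinset fun i => Finset.Icc (-(r : ℤ)) (2 ^ k i + r) with hA
  have hsupp : ∀ s ∉ A, a s = 0 := by
    intro s hs
    apply ha
    intro hmem
    apply hs
    rw [hA, Fintype.mem_piFinset]
    intro i
    obtain ⟨h1, h2⟩ := hmem i
    rw [Finset.mem_Icc]
    have hr0 : (0:ℝ) ≤ (r:ℝ) := Nat.cast_nonneg r
    constructor
    · have hsr : -(r:ℝ) ≤ (s i : ℝ) := by
        have : -(r:ℝ) ≤ -(r:ℝ)/2 := by linarith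
        linarith
      exact_mod_cast hsr
    · have h2' : (s i : ℝ) ≤ 2 ^ k i + r := by
        have : (r:ℝ)/2 ≤ r := by linarith
        linarith
      have : ((s i : ℤ) : ℝ) ≤ ((2 ^ k i + r : ℤ) : ℝ) := by push_cast at h2' ⊢; linarith
      exact_mod_cast this
  have hgfun : (fun x => ∑' s : Fin d → ℤ, a s * mixedBSpline r d k s x)
      = fun x => ∑ s ∈ A, a s * mixedBSpline r d k s x := by
    funext x
    exact tsum_eq_sum fun s hs => by rw [hsupp s hs, zero_mul]
  rw [hgfun]
  set g : (Fin d → ℝ) → ℝ := fun x => ∑ s ∈ A, a s * mixedBSpline r d k s x with hg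
  have hgm : Measurable g := Finset.measurable_sum _ fun s _ => (mB_measurable r d k s).const_mul _
  set L : ℝ≥0∞ := ∫⁻ x, (‖g x‖₊ : ℝ≥0∞) ^ p ∂μ with hL
  set D : ℝ≥0∞ := ENNReal.ofReal (co * 2 ^ (∑ i, k i + d)) with hD
  have hDnt : D ≠ ⊤ := ENNReal.ofReal_ne_top
  have hDpos : 0 < D := by
    rw [hD]
    exact ENNReal.ofReal_pos.mpr (by positivity)
  have key : ∀ᵐ x ∂μ, (‖g x‖₊ : ℝ≥0∞) ^ p ≤ D * L := by
    set hsc : Fin d → ℝ := fun i => ((2:ℝ) ^ (k i + 1))⁻¹ with hhsc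
    have hposc : ∀ i, 0 < hsc i := fun i => by rw [hhsc]; positivity
    set cvol : ℝ≥0∞ := ∏ i, ENNReal.ofReal (hsc i) with hcvol
    have hcvol_eq : cvol = ENNReal.ofReal (((2:ℝ) ^ (∑ i, k i + d))⁻¹) := by
      rw [hcvol, ← ENNReal.ofReal_prod_of_nonneg (fun i _ => (hposc i).le)]
      congr 1
      rw [hhsc, Finset.prod_inv_distrib]
      congr 1
      rw [Finset.prod_pow_eq_pow_sum]
      congr 1
      rw [Finset.sum_add_distrib, Finset.sum_const, Finset.card_univ, Fintype.card_fin,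
        smul_eq_mul, mul_one]
    have hcvol0 : cvol ≠ 0 := by
      rw [hcvol_eq]
      exact (ENNReal.ofReal_pos.mpr (by positivity)).ne'
    have hcvolt : cvol ≠ ⊤ := by rw [hcvol_eq]; exact ENNReal.ofReal_ne_top
    have hcvolinv : cvol⁻¹ = ENNReal.ofReal ((2:ℝ) ^ (∑ i, k i + d)) := by
      rw [hcvol_eq, ← ENNReal.ofReal_inv_of_pos (by positivity), inv_inv]
    set cell : (Fin d → ℕ) → Set (Fin d → ℝ) := fun m =>
      Set.univ.pi fun i => Set.Icc ((m i : ℝ) * hsc i) (((m i : ℝ) + 1) * hsc i) with hcell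
    have hcellm : ∀ m, MeasurableSet (cell m) := fun m =>
      MeasurableSet.univ_pi fun i => measurableSet_Icc
    set M : Finset (Fin d → ℕ) := Fintype.piFinset fun i => Finset.range (2 ^ (k i + 1)) with hM
    have hcellsub : ∀ m ∈ M, cell m ⊆ unitCube d := by
      intro m hm x hx
      rw [hM, Fintype.mem_piFinset] at hm
      intro i _
      have hxi := hx i trivial
      rw [Set.mem_Icc] at hxi ⊢
      have hmi := hm i
      rw [Finset.mem_range] at hmi
      have hmiR : (m i : ℝ) + 1 ≤ (2:ℝ) ^ (k i + 1) := by
        have : (m i : ℝ) + 1 ≤ ((2 ^ (k i + 1) : ℕ) : ℝ) := by exact_mod_cast hmi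
        simpa [Nat.cast_pow] using this
      have hscv : hsc i * (2:ℝ) ^ (k i + 1) = 1 := by
        rw [hhsc]
        field_simp
      constructor
      · have : (0:ℝ) ≤ (m i : ℝ) * hsc i := by positivity
        linarith [hxi.1]
      · have h2 : ((m i : ℝ) + 1) * hsc i ≤ (2:ℝ) ^ (k i + 1) * hsc i :=
          mul_le_mul_of_nonneg_right hmiR (hposc i).le
        have : (2:ℝ) ^ (k i + 1) * hsc i = 1 := by rw [mul_comm]; exact hscv
        linarith [hxi.2]
    have hcover : ∀ x ∈ unitCube d, ∃ m ∈ M, x ∈ cell m := by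
      intro x hx
      have hchoice : ∀ i : Fin d, ∃ j : ℕ, j < 2 ^ (k i + 1) ∧
          (j : ℝ) * hsc i ≤ x i ∧ x i ≤ ((j : ℝ) + 1) * hsc i := by
        intro i
        have hxi := hx i trivial
        rw [Set.mem_Icc] at hxi
        obtain ⟨j, hj1, hj2, hj3⟩ := cell_cover (2 ^ (k i + 1)) (by positivity) (x i) hxi.1 hxi.2
        refine ⟨j, hj1, ?_, ?_⟩
        · have : (j : ℝ) / ((2 ^ (k i + 1) : ℕ) : ℝ) = (j : ℝ) * hsc i := by
            rw [hhsc, div_eq_mul_inv, Nat.cast_pow]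
            norm_num
          rwa [this] at hj2
        · have : ((j : ℝ) + 1) / ((2 ^ (k i + 1) : ℕ) : ℝ) = ((j : ℝ) + 1) * hsc i := by
            rw [hhsc, div_eq_mul_inv, Nat.cast_pow]
            norm_num
          rwa [this] at hj3
      choose m hm1 hm2 hm3 using hchoice
      refine ⟨m, ?_, ?_⟩
      · rw [hM, Fintype.mem_piFinset]
        intro i
        rw [Finset.mem_range]
        exact hm1 i
      · intro i _
        exact Set.mem_Icc.mpr ⟨hm2 i, hm3 i⟩
    -- the bad set
    set E : Set (Fin d → ℝ) := {x | ¬ ((‖g x‖₊ : ℝ≥0∞) ^ p ≤ D * L)} with hE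
    have hgE : Measurable fun x => (‖g x‖₊ : ℝ≥0∞) ^ p :=
      (hgm.nnnorm.coe_nnreal_ennreal).pow_const p
    have hEmeas : MeasurableSet E := by
      have : E = {x | D * L < (‖g x‖₊ : ℝ≥0∞) ^ p} := by
        ext x; simp [hE, not_le]
      rw [this]
      exact measurableSet_lt measurable_const hgE
    -- per cell nullity
    have percell : ∀ m ∈ M, volume.restrict (cell m) E = 0 := by
      intro m hm
      set b : Fin d → ℝ := fun i => (m i : ℝ) * hsc i with hb
      set Ψ : (Fin d → ℝ) → (Fin d → ℝ) := fun y => fun i => hsc i * y i + b i with hΨ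
      have mp0 := affine_measurePreserving hsc hposc b
      have hΨmeas : Measurable Ψ := mp0.measurable
      have hpre : Ψ ⁻¹' (cell m) = unitCube d := by
        ext y
        simp only [hcell, Set.mem_preimage, Set.mem_pi, Set.mem_univ, true_implies, unitCube,
          Set.mem_Icc, hΨ, hb]
        constructor
        · intro h i
          have h1 := (h i).1
          have h2 := (h i).2
          constructor <;> nlinarith [hposc i]
        · intro h i
          have h1 := (h i).1
          have h2 := (h i).2
          constructor <;> nlinarith [hposc i]
      have mp : MeasurePreserving Ψ (cvol • μ) (volume.restrict (cell m)) := by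
        have h1 := mp0.restrict_preimage (hcellm m)
        rw [hpre, Measure.restrict_smul] at h1
        exact h1
      -- coefficients
      set tv : (Fin d → ℤ) → (Fin d → ℤ) := fun s i => (m i : ℤ) - 2 * s i with htv
      set c : ι → ℝ :=
        fun t => ∑ s ∈ A, if tv s = (fun i => ((t i : ℤ))) then a s else 0 with hc
      have hid : ∀ y ∈ unitCube d, g (Ψ y) = ∑ t, c t * φ t y := by
        intro y hy
        have hy01 : ∀ i, 0 ≤ y i ∧ y i ≤ 1 := by
          intro i
          have := hy i trivial
          rwa [Set.mem_Icc] at this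
        have hcast1 : ((r - 1 : ℕ) : ℝ) + 1 = (r : ℝ) := by
          rw [Nat.cast_sub hr]
          push_cast
          ring
        have harg : ∀ (s : Fin d → ℤ) (i : Fin d),
            (2:ℝ) ^ k i * (Ψ y) i - (s i : ℝ) = (y i + ((tv s i : ℤ) : ℝ)) / 2 := by
          intro s i
          have h2 : (2:ℝ) ^ k i * hsc i = 1/2 := by
            show (2:ℝ) ^ k i * ((2:ℝ) ^ (k i + 1))⁻¹ = 1/2
            have hne : (2:ℝ) ^ k i ≠ 0 := by positivity
            rw [pow_succ, mul_inv, ← mul_assoc, mul_inv_cancel₀ hne, one_mul]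
            norm_num
          have hΨi : (Ψ y) i = hsc i * y i + (m i : ℝ) * hsc i := rfl
          rw [hΨi]
          have htvi : ((tv s i : ℤ) : ℝ) = (m i : ℝ) - 2 * (s i : ℝ) := by
            rw [htv]
            push_cast
            ring
          rw [htvi]
          have expand : (2:ℝ) ^ k i * (hsc i * y i + (m i : ℝ) * hsc i)
              = ((2:ℝ) ^ k i * hsc i) * y i + ((2:ℝ) ^ k i * hsc i) * (m i : ℝ) := by ring
          rw [expand, h2]
          ring
        have hgΨ : g (Ψ y) = ∑ s ∈ A, a s *
            ∏ i, centeredBSpline (r - 1) ((y i + ((tv s i : ℤ) : ℝ)) / 2) := by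
          rw [hg]
          refine Finset.sum_congr rfl fun s _ => ?_
          congr 1
          rw [mixedBSpline]
          exact Finset.prod_congr rfl fun i _ => by rw [harg s i]
        rw [hgΨ, hc]
        have hexp : ∀ t : ι,
            (∑ s ∈ A, if tv s = (fun i => ((t i : ℤ))) then a s else 0) * φ t y
            = ∑ s ∈ A, (if tv s = (fun i => ((t i : ℤ))) then a s * φ t y else 0) := by
          intro t
          rw [Finset.sum_mul]
          exact Finset.sum_congr rfl fun s _ => by
            by_cases hcond : tv s = (fun i => ((t i : ℤ)))
            · rw [if_pos hcond, if_pos hcond]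
            · rw [if_neg hcond, if_neg hcond, zero_mul]
        calc (∑ s ∈ A, a s * ∏ i, centeredBSpline (r - 1) ((y i + ((tv s i : ℤ) : ℝ)) / 2))
            = ∑ s ∈ A, ∑ t : ι, (if tv s = (fun i => ((t i : ℤ))) then a s * φ t y else 0) := by
              refine Finset.sum_congr rfl fun s _ => ?_
              by_cases hok : ∀ i, tv s i ∈ Finset.Icc (-(r : ℤ) - 1) ((r : ℤ) + 1)
              · have ht₀mem : ∀ i, tv s i ∈ Finset.Icc (-(r : ℤ) - 1) ((r : ℤ) + 1) := hok
                set t₀ : ι := fun i => ⟨tv s i, ht₀mem i⟩ with ht₀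
                rw [Finset.sum_eq_single t₀]
                · rw [if_pos]
                  funext i
                  rfl
                · intro t _ hne
                  rw [if_neg]
                  intro heq
                  apply hne
                  funext i
                  exact Subtype.ext (congrFun heq i).symm
                · intro habs
                  exact absurd (Finset.mem_univ t₀) habs
              · push_neg at hok
                obtain ⟨i₀, hi₀⟩ := hok
                rw [Finset.sum_eq_zero]
                · have hz : centeredBSpline (r - 1) ((y i₀ + ((tv s i₀ : ℤ) : ℝ)) / 2) = 0 := by
                    have hrange : tv s i₀ < -(r : ℤ) - 1 ∨ (r : ℤ) + 1 < tv s i₀ := by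
                      rw [Finset.mem_Icc] at hi₀
                      omega
                    apply cB_zero
                    rcases hrange with hlt | hgt
                    · right
                      have h1 : ((tv s i₀ : ℤ) : ℝ) ≤ -(r : ℝ) - 2 := by
                        have : tv s i₀ ≤ -(r : ℤ) - 2 := by omega
                        exact_mod_cast this
                      rw [hcast1]
                      have := (hy01 i₀).2
                      have hrpos : (0:ℝ) < r := by exact_mod_cast hr
                      nlinarith
                    · left
                      have h1 : (r : ℝ) + 2 ≤ ((tv s i₀ : ℤ) : ℝ) := by
                        have : (r : ℤ) + 2 ≤ tv s i₀ := by omega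
                        exact_mod_cast this
                      rw [hcast1]
                      have := (hy01 i₀).1
                      linarith
                  rw [Finset.prod_eq_zero (Finset.mem_univ i₀) hz, mul_zero]
                · intro t _
                  rw [if_neg]
                  intro heq
                  apply hi₀
                  rw [show tv s i₀ = ((t i₀ : ℤ)) from congrFun heq i₀]
                  exact (t i₀).2
          _ = ∑ t : ι, ∑ s ∈ A, (if tv s = (fun i => ((t i : ℤ))) then a s * φ t y else 0) :=
              Finset.sum_comm
          _ = ∑ t : ι, (∑ s ∈ A, if tv s = (fun i => ((t i : ℤ))) then a s else 0) * φ t y := by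
              exact Finset.sum_congr rfl fun t _ => (hexp t).symm
      -- integrability
      set Rb : ℝ := ∑ s ∈ A, |a s| with hRb
      have hgb : ∀ x, |g x| ≤ Rb := by
        intro x
        rw [hg, hRb]
        refine (Finset.abs_sum_le_sum_abs _ _).trans (Finset.sum_le_sum fun s _ => ?_)
        rw [abs_mul]
        have h1 : |mixedBSpline r d k s x| ≤ 1 := by
          rw [abs_of_nonneg (mB_nonneg r d k s x)]
          exact mB_le_one r d k s x
        calc |a s| * |mixedBSpline r d k s x| ≤ |a s| * 1 :=
            mul_le_mul_of_nonneg_left h1 (abs_nonneg _)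
          _ = |a s| := mul_one _
      have hgΨm : Measurable fun y => g (Ψ y) := hgm.comp hΨmeas
      have hInt : Integrable (fun y => |g (Ψ y)| ^ p) μ := by
        refine Integrable.mono' (integrable_const (max 0 Rb ^ p))
          ((hgΨm.abs.pow_const p).aestronglyMeasurable) ?_
        filter_upwards with y
        rw [Real.norm_eq_abs, abs_of_nonneg (Real.rpow_nonneg (abs_nonneg _) _)]
        exact Real.rpow_le_rpow (abs_nonneg _) ((hgb _).trans (le_max_right _ _)) hp.le
      have hcube_ae : ∀ᵐ y ∂μ, y ∈ unitCube d := ae_restrict_mem (unitCube_measurable d)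
      have hIeq : ∫ y, |∑ t, c t * φ t y| ^ p ∂μ = ∫ y, |g (Ψ y)| ^ p ∂μ := by
        refine integral_congr_ae ?_
        filter_upwards [hcube_ae] with y hy
        rw [hid y hy]
      have hae1 : ∀ᵐ y ∂μ, |g (Ψ y)| ^ p ≤ co * ∫ y, |g (Ψ y)| ^ p ∂μ := by
        filter_upwards [hni c, hcube_ae] with y h1y hy
        rw [hid y hy, ← hIeq]
        exact h1y
      set LΨ : ℝ≥0∞ := ∫⁻ y, (‖g (Ψ y)‖₊ : ℝ≥0∞) ^ p ∂μ with hLΨ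
      have hptwise : ∀ u : ℝ, (‖u‖₊ : ℝ≥0∞) ^ p = ENNReal.ofReal (|u| ^ p) := by
        intro u
        rw [← enorm_eq_nnnorm, ← ofReal_norm, Real.norm_eq_abs,
          ENNReal.ofReal_rpow_of_nonneg (abs_nonneg u) hp.le]
      have hLΨeq : LΨ = ENNReal.ofReal (∫ y, |g (Ψ y)| ^ p ∂μ) := by
        rw [hLΨ, ofReal_integral_eq_lintegral_ofReal hInt
          (Filter.Eventually.of_forall fun y => Real.rpow_nonneg (abs_nonneg _) _)]
        exact lintegral_congr fun y => hptwise _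
      have hcelleq : (∫⁻ x, (‖g x‖₊ : ℝ≥0∞) ^ p ∂(volume.restrict (cell m)))
          = cvol * LΨ := by
        rw [← mp.lintegral_comp hgE, lintegral_smul_measure, smul_eq_mul]
      have hLΨle : LΨ ≤ cvol⁻¹ * L := by
        have h1 : (∫⁻ x, (‖g x‖₊ : ℝ≥0∞) ^ p ∂(volume.restrict (cell m))) ≤ L := by
          rw [hL]
          exact lintegral_mono' (Measure.restrict_mono (hcellsub m hm) le_rfl) le_rfl
        rw [hcelleq] at h1
        calc LΨ = cvol⁻¹ * (cvol * LΨ) := by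
              rw [← mul_assoc, ENNReal.inv_mul_cancel hcvol0 hcvolt, one_mul]
          _ ≤ cvol⁻¹ * L := mul_le_mul_right h1 _
      -- a.e. on reference cube, the enorm bound holds at Ψ y
      have hae2 : ∀ᵐ y ∂μ, (‖g (Ψ y)‖₊ : ℝ≥0∞) ^ p ≤ D * L := by
        filter_upwards [hae1] with y h1y
        rw [hptwise]
        calc ENNReal.ofReal (|g (Ψ y)| ^ p)
            ≤ ENNReal.ofReal (co * ∫ y, |g (Ψ y)| ^ p ∂μ) := ENNReal.ofReal_le_ofReal h1y
          _ = ENNReal.ofReal co * ENNReal.ofReal (∫ y, |g (Ψ y)| ^ p ∂μ) :=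
              ENNReal.ofReal_mul hco.le
          _ = ENNReal.ofReal co * LΨ := by rw [hLΨeq]
          _ ≤ ENNReal.ofReal co * (cvol⁻¹ * L) := mul_le_mul_right hLΨle _
          _ = D * L := by
              rw [hcvolinv, ← mul_assoc, hD, ENNReal.ofReal_mul hco.le]
      have hpreE : Ψ ⁻¹' E = {y | ¬ ((‖g (Ψ y)‖₊ : ℝ≥0∞) ^ p ≤ D * L)} := rfl
      have hnull : μ (Ψ ⁻¹' E) = 0 := by
        rw [hpreE]
        exact hae2
      have := mp.measure_preimage hEmeas.nullMeasurableSet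
      rw [← this, Measure.smul_apply, smul_eq_mul, hnull, mul_zero]
    -- combine cells
    have hEainter : (volume.restrict (unitCube d)) E = 0 := by
      rw [Measure.restrict_apply hEmeas]
      have hsub : E ∩ unitCube d ⊆ ⋃ m ∈ M, E ∩ cell m := by
        intro x hx
        obtain ⟨m, hm, hxm⟩ := hcover x hx.2
        exact Set.mem_biUnion hm ⟨hx.1, hxm⟩
      refine measure_mono_null hsub ?_
      refine (measure_biUnion_null_iff M.countable_toSet).mpr fun m hm => ?_
      have := percell m hm
      rw [Measure.restrict_apply hEmeas] at this
      exact this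
    rw [hμ, ae_iff]
    exact hEainter
  -- Final computation
  have hq0 : (ENNReal.ofReal q) ≠ 0 := by
    simp only [ne_eq, ENNReal.ofReal_eq_zero, not_le]
    exact hq
  have hp0 : (ENNReal.ofReal p) ≠ 0 := by
    simp only [ne_eq, ENNReal.ofReal_eq_zero, not_le]
    exact hp
  rw [eLpNorm_eq_lintegral_rpow_enorm_toReal hq0 ENNReal.ofReal_ne_top,
    eLpNorm_eq_lintegral_rpow_enorm_toReal hp0 ENNReal.ofReal_ne_top,
    ENNReal.toReal_ofReal hq.le, ENNReal.toReal_ofReal hp.le]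
  simp only [enorm_eq_nnnorm]
  rw [← hL]
  have hCraw : D ^ β = ENNReal.ofReal ((co * 2 ^ d) ^ β * 2 ^ (β * ∑ i, (k i : ℝ))) := by
    rw [hD, ENNReal.ofReal_rpow_of_pos (by positivity)]
    congr 1
    have h1 : co * 2 ^ (∑ i, k i + d) = (co * 2 ^ d) * 2 ^ (∑ i, k i) := by
      rw [pow_add]; ring
    rw [h1, Real.mul_rpow (by positivity) (by positivity)]
    congr 1
    rw [← Real.rpow_natCast (2:ℝ) (∑ i, k i), ← Real.rpow_mul (by norm_num : (0:ℝ) ≤ 2)]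
    congr 1
    push_cast
    ring
  by_cases hL0 : L = 0
  · have hgq0 : ∀ᵐ x ∂μ, (‖g x‖₊ : ℝ≥0∞) ^ q = 0 := by
      filter_upwards [key] with x hx
      rw [hL0, mul_zero] at hx
      have hxx : (‖g x‖₊ : ℝ≥0∞) ^ p = 0 := le_antisymm hx zero_le
      have hzz : (‖g x‖₊ : ℝ≥0∞) = 0 := by
        rcases ENNReal.rpow_eq_zero_iff.mp hxx with ⟨h, _⟩ | ⟨_, hneg⟩
        · exact h
        · exact absurd hneg (not_lt.mpr hp.le)
      rw [hzz, ENNReal.zero_rpow_of_pos hq]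
    have hLq : (∫⁻ x, (‖g x‖₊ : ℝ≥0∞) ^ q ∂μ) = 0 := by
      rw [lintegral_congr_ae hgq0, lintegral_zero]
    rw [hLq, ENNReal.zero_rpow_of_pos (by positivity : (0:ℝ) < 1 / q)]
    exact zero_le
  by_cases hLt : L = ⊤
  · have hrhs : ENNReal.ofReal ((co * 2 ^ d) ^ β * 2 ^ (β * ∑ i, (k i : ℝ))) * L ^ (1 / p)
        = ⊤ := by
      rw [hLt, ENNReal.top_rpow_of_pos (by positivity), ENNReal.mul_top
        (ENNReal.ofReal_pos.mpr (by positivity)).ne']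
    rw [hrhs]
    exact le_top
  -- generic case
  set α : ℝ := (q - p) / p with hα
  have hα0 : 0 ≤ α := by
    rw [hα]
    exact div_nonneg (by linarith) hp.le
  have hmono : ∀ᵐ x ∂μ, (‖g x‖₊ : ℝ≥0∞) ^ q ≤ (D * L) ^ α * (‖g x‖₊ : ℝ≥0∞) ^ p := by
    filter_upwards [key] with x hx
    by_cases hgx : (‖g x‖₊ : ℝ≥0∞) = 0
    · rw [hgx, ENNReal.zero_rpow_of_pos hq]
      exact zero_le
    · have hgxt : (‖g x‖₊ : ℝ≥0∞) ≠ ⊤ := ENNReal.coe_ne_top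
      have h1 : (‖g x‖₊ : ℝ≥0∞) ^ q = (‖g x‖₊ : ℝ≥0∞) ^ (q - p) * (‖g x‖₊ : ℝ≥0∞) ^ p := by
        rw [← ENNReal.rpow_add _ _ hgx hgxt]
        congr 1
        ring
      rw [h1]
      refine mul_le_mul_left ?_ _
      have h2 : (‖g x‖₊ : ℝ≥0∞) ^ (q - p) = ((‖g x‖₊ : ℝ≥0∞) ^ p) ^ α := by
        rw [← ENNReal.rpow_mul]
        congr 1
        rw [hα]
        field_simp
      rw [h2]
      exact ENNReal.rpow_le_rpow hx hα0
  have hLq_le : (∫⁻ x, (‖g x‖₊ : ℝ≥0∞) ^ q ∂μ) ≤ (D * L) ^ α * L := by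
    calc (∫⁻ x, (‖g x‖₊ : ℝ≥0∞) ^ q ∂μ)
        ≤ ∫⁻ x, (D * L) ^ α * (‖g x‖₊ : ℝ≥0∞) ^ p ∂μ := lintegral_mono_ae hmono
      _ = (D * L) ^ α * L := by
          rw [lintegral_const_mul _ (hgm.nnnorm.coe_nnreal_ennreal.pow_const p), ← hL]
  have hstep : ((D * L) ^ α * L) ^ (1 / q) = D ^ β * L ^ (1 / p) := by
    rw [ENNReal.mul_rpow_of_ne_top hDnt hLt, mul_assoc]
    have hLL : L ^ α * L = L ^ (α + 1) := by
      rw [ENNReal.rpow_add _ _ hL0 hLt, ENNReal.rpow_one]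
    rw [hLL, ENNReal.mul_rpow_of_ne_top (ENNReal.rpow_ne_top_of_nonneg hα0 hDnt)
      (ENNReal.rpow_ne_top_of_nonneg (by positivity) hLt),
      ← ENNReal.rpow_mul D, ← ENNReal.rpow_mul L]
    congr 1
    · congr 1
      rw [hα, hβ]
      field_simp
    · congr 1
      rw [hα]
      field_simp
      ring
  calc (∫⁻ x, (‖g x‖₊ : ℝ≥0∞) ^ q ∂μ) ^ (1 / q)
      ≤ ((D * L) ^ α * L) ^ (1 / q) := ENNReal.rpow_le_rpow hLq_le (by positivity)
    _ = D ^ β * L ^ (1 / p) := hstep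
    _ = ENNReal.ofReal ((co * 2 ^ d) ^ β * 2 ^ (β * ∑ i, (k i : ℝ))) * L ^ (1 / p) := by
        rw [hCraw]
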